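/- The function Q(y) = h(1/2 - √y) is concave on the interval [0, 1/4], where h is the binary entropy function with logarithm base 2. -/

import Mathlib

open Real

noncomputable def binEnt (p : ℝ) : ℝ := -(p * Real.logb 2 p) - (1 - p) * Real.logb 2 (1 - p)


lemma logA {p q : ℝ} (hp : 0 < p) (hpq : p < q) :
    log q - log p < (q - p) / Real.sqrt (p * q) := by
  have hq : 0 < q := hp.trans hpq
  set x : ℝ := Real.sqrt q / Real.sqrt p with hxdef
  have hsp : 0 < Real.sqrt p := Real.sqrt_pos.2 hp
  have hsq : 0 < Real.sqrt q := Real.sqrt_pos.2 hq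
  have hx1 : 1 < x := by
    rw [hxdef, lt_div_iff₀ hsp, one_mul]
    exact Real.sqrt_lt_sqrt hp.le hpq
  have hu : 0 < Real.log x := Real.log_pos hx1
  have hsinh := Real.self_lt_sinh_iff.2 hu
  rw [Real.sinh_eq, Real.exp_neg, Real.exp_log (by linarith)] at hsinh
  have hxe : x - x⁻¹ = (q - p) / Real.sqrt (p * q) := by
    rw [hxdef, Real.sqrt_mul hp.le, inv_div,
      div_sub_div _ _ hsp.ne' hsq.ne', Real.mul_self_sqrt hq.le, Real.mul_self_sqrt hp.le]
  have hlx : Real.log x = (Real.log q - Real.log p) / 2 := by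
    rw [hxdef, Real.log_div hsq.ne' hsp.ne', Real.log_sqrt hq.le, Real.log_sqrt hp.le]; ring
  linarith

lemma keyIneq {t : ℝ} (ht : 0 < t) (ht2 : t < 1/2) :
    log (1/2 + t) - log (1/2 - t) < t / ((1/2 - t) * (1/2 + t)) := by
  have hp : (0:ℝ) < 1/2 - t := by linarith
  have hq : (0:ℝ) < 1/2 + t := by linarith
  have h1 := logA hp (show (1:ℝ)/2 - t < 1/2 + t by linarith)
  have hpq : 0 < (1/2 - t) * (1/2 + t) := mul_pos hp hq
  have hle : (1/2 - t) * (1/2 + t) ≤ 1/4 := by nlinarith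
  set s := Real.sqrt ((1/2 - t) * (1/2 + t)) with hsdef
  have hspos : 0 < s := Real.sqrt_pos.2 hpq
  have hss : s * s = (1/2 - t) * (1/2 + t) := Real.mul_self_sqrt hpq.le
  have hs : s ≤ 1/2 := by
    have h14 : s ≤ Real.sqrt (1/4) := Real.sqrt_le_sqrt hle
    rwa [show Real.sqrt (1/4) = 1/2 from by
      rw [show (1/4:ℝ) = (1/2)^2 by norm_num, Real.sqrt_sq (by norm_num : (0:ℝ) ≤ 1/2)]] at h14
  have h2 : ((1/2 + t) - (1/2 - t)) / s ≤ t / ((1/2 - t) * (1/2 + t)) := by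
    rw [show (1/2 + t) - (1/2 - t) = 2*t by ring, div_le_div_iff₀ hspos hpq]
    calc 2*t*((1/2-t)*(1/2+t)) = (t*s)*(2*s) := by rw [← hss]; ring
      _ ≤ (t*s)*1 := mul_le_mul_of_nonneg_left (by linarith) (mul_pos ht hspos).le
      _ = t*s := by ring
  linarith

noncomputable def gfun (y : ℝ) : ℝ :=
  (Real.log (1/2 - Real.sqrt y) - Real.log (1/2 + Real.sqrt y)) / (2 * Real.sqrt y)

lemma sqrt_facts {x : ℝ} (hx : 0 < x) (hx2 : x < 1/4) :
    0 < Real.sqrt x ∧ Real.sqrt x < 1/2 := by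
  refine ⟨Real.sqrt_pos.2 hx, ?_⟩
  rw [show (1/2:ℝ) = Real.sqrt (1/4) from by
    rw [show (1/4:ℝ) = (1/2)^2 by norm_num, Real.sqrt_sq (by norm_num : (0:ℝ) ≤ 1/2)]]
  exact Real.sqrt_lt_sqrt hx.le hx2

lemma hasDerivAt_F {x : ℝ} (hx : 0 < x) (hx2 : x < 1/4) :
    HasDerivAt (fun y => Real.binEntropy (1/2 - Real.sqrt y)) (gfun x) x := by
  obtain ⟨ht, ht2⟩ := sqrt_facts hx hx2
  have hp : (0:ℝ) < 1/2 - Real.sqrt x := by linarith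
  have hs : HasDerivAt Real.sqrt (1/(2*Real.sqrt x)) x := Real.hasDerivAt_sqrt hx.ne'
  have hinner : HasDerivAt (fun y => 1/2 - Real.sqrt y) (-(1/(2*Real.sqrt x))) x :=
    hs.const_sub (1/2)
  have houter : HasDerivAt Real.binEntropy
      (Real.log (1 - (1/2 - Real.sqrt x)) - Real.log (1/2 - Real.sqrt x)) (1/2 - Real.sqrt x) :=
    Real.hasDerivAt_binEntropy hp.ne' (by linarith)
  have hcomp := houter.comp x hinner
  simp only [Function.comp_def] at hcomp
  refine hcomp.congr_deriv ?_
  symm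
  rw [show (1:ℝ) - (1/2 - Real.sqrt x) = 1/2 + Real.sqrt x by ring]
  unfold gfun
  field_simp
  ring

lemma hasDerivAt_g {x : ℝ} (hx : 0 < x) (hx2 : x < 1/4) :
    HasDerivAt gfun
      ((((-(1/(2*Real.sqrt x)))/(1/2 - Real.sqrt x) - (1/(2*Real.sqrt x))/(1/2 + Real.sqrt x)) * (2*Real.sqrt x)
        - (Real.log (1/2 - Real.sqrt x) - Real.log (1/2 + Real.sqrt x)) * (2*(1/(2*Real.sqrt x))))
        / (2*Real.sqrt x)^2) x := by
  obtain ⟨ht, ht2⟩ := sqrt_facts hx hx2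
  have hp : (0:ℝ) < 1/2 - Real.sqrt x := by linarith
  have hq : (0:ℝ) < 1/2 + Real.sqrt x := by linarith
  have hs : HasDerivAt Real.sqrt (1/(2*Real.sqrt x)) x := Real.hasDerivAt_sqrt hx.ne'
  have h1 : HasDerivAt (fun y => 1/2 - Real.sqrt y) (-(1/(2*Real.sqrt x))) x := hs.const_sub (1/2)
  have h2 : HasDerivAt (fun y => 1/2 + Real.sqrt y) (1/(2*Real.sqrt x)) x := hs.const_add (1/2)
  have hN : HasDerivAt (fun y => Real.log (1/2 - Real.sqrt y) - Real.log (1/2 + Real.sqrt y))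
      ((-(1/(2*Real.sqrt x)))/(1/2 - Real.sqrt x) - (1/(2*Real.sqrt x))/(1/2 + Real.sqrt x)) x :=
    (h1.log hp.ne').sub (h2.log hq.ne')
  have hD : HasDerivAt (fun y => 2 * Real.sqrt y) (2*(1/(2*Real.sqrt x))) x := hs.const_mul 2
  exact hN.div hD (by positivity)

lemma deriv2_neg {x : ℝ} (hx : 0 < x) (hx2 : x < 1/4) :
    (((-(1/(2*Real.sqrt x)))/(1/2 - Real.sqrt x) - (1/(2*Real.sqrt x))/(1/2 + Real.sqrt x)) * (2*Real.sqrt x)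
      - (Real.log (1/2 - Real.sqrt x) - Real.log (1/2 + Real.sqrt x)) * (2*(1/(2*Real.sqrt x))))
      / (2*Real.sqrt x)^2 < 0 := by
  have ht : 0 < Real.sqrt x := Real.sqrt_pos.2 hx
  have ht2 : Real.sqrt x < 1/2 := by
    rw [show (1/2:ℝ) = Real.sqrt (1/4) from by
      rw [show (1/4:ℝ) = (1/2)^2 by norm_num, Real.sqrt_sq (by norm_num : (0:ℝ) ≤ 1/2)]]
    exact Real.sqrt_lt_sqrt hx.le hx2
  set t := Real.sqrt x with htdef
  have hp : (0:ℝ) < 1/2 - t := by linarith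
  have hq : (0:ℝ) < 1/2 + t := by linarith
  apply div_neg_of_neg_of_pos _ (by positivity)
  have key := keyIneq ht ht2
  have e1 : ((-(1/(2*t)))/(1/2 - t) - (1/(2*t))/(1/2 + t)) * (2*t)
      = -(1/((1/2 - t)*(1/2 + t))) := by
    rw [div_sub_div _ _ hp.ne' hq.ne', show -(1/(2*t))*(1/2+t) - (1/2-t)*(1/(2*t)) = -(1/(2*t)) by
      field_simp; ring]
    rw [div_mul_eq_mul_div, show -(1/(2*t))*(2*t) = -1 from by field_simp]
    ring
  have e2 : (Real.log (1/2 - t) - Real.log (1/2 + t)) * (2*(1/(2*t)))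
      = (Real.log (1/2 - t) - Real.log (1/2 + t)) / t := by
    field_simp
  rw [e1, e2]
  have h3 : (Real.log (1/2 + t) - Real.log (1/2 - t)) / t < 1/((1/2 - t)*(1/2 + t)) := by
    rw [div_lt_iff₀ ht]
    calc Real.log (1/2 + t) - Real.log (1/2 - t) < t/((1/2 - t)*(1/2 + t)) := key
      _ = 1/((1/2 - t)*(1/2 + t)) * t := by ring
  have h4 : (Real.log (1/2 - t) - Real.log (1/2 + t)) / t
      = -((Real.log (1/2 + t) - Real.log (1/2 - t)) / t) := by ring
  linarith

theorem stmt_1 :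
    ConcaveOn ℝ (Set.Icc (0:ℝ) (1/4)) (fun y => binEnt (1/2 - Real.sqrt y)) := by
  have hF : StrictConcaveOn ℝ (Set.Icc (0:ℝ) (1/4))
      (fun y => Real.binEntropy (1/2 - Real.sqrt y)) := by
    apply strictConcaveOn_of_deriv2_neg (convex_Icc _ _)
    · exact Real.binEntropy_continuous.comp (by continuity) |>.continuousOn
    · intro x hx
      rw [interior_Icc, Set.mem_Ioo] at hx
      have hev : deriv (fun y => Real.binEntropy (1/2 - Real.sqrt y)) =ᶠ[nhds x] gfun := by
        filter_upwards [Ioo_mem_nhds hx.1 hx.2] with y hy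
        exact (hasDerivAt_F hy.1 hy.2).deriv
      have h2 : deriv^[2] (fun y => Real.binEntropy (1/2 - Real.sqrt y)) x = deriv gfun x := by
        simp only [Function.iterate_succ, Function.iterate_zero, Function.comp, id]
        exact hev.deriv_eq
      rw [h2, (hasDerivAt_g hx.1 hx.2).deriv]
      exact deriv2_neg hx.1 hx.2
  have heq : (fun y => binEnt (1/2 - Real.sqrt y))
      = (Real.log 2)⁻¹ • (fun y => Real.binEntropy (1/2 - Real.sqrt y)) := by
    funext y
    simp only [Pi.smul_apply, smul_eq_mul, binEnt, Real.binEntropy, Real.logb,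
      Real.log_inv]
    ring
  rw [heq]
  exact hF.concaveOn.smul (by positivity)
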